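/- Let M₂ be a real symmetric n×n matrix, λ an eigenvalue of M₂ of multiplicity 1 with eigenvector f ≠ 0, D a diagonal n×n matrix with positive diagonal entries, and M₁ = D M₂ D^{−1}. Define P_λ by P_λ φ = (⟨φ, D^{−1} f⟩ / ⟨f, f⟩) D f. Then P_λ² = P_λ, P_λ M₁ = M₁ P_λ = λ P_λ, and the operator norm of P_λ with respect to the l¹ norm on ℂ^n equals ‖Df‖₁ · ‖D^{−1} f‖_∞ / ⟨f, f⟩. -/

import Mathlib

open scoped Matrix

/-- Let `M₂` be a real symmetric `n×n` matrix, `λ` an eigenvalue of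
multiplicity 1 with eigenvector `f ≠ 0`, `D = diagonal d` with `d > 0`, and
`M₁ = D M₂ D⁻¹`.  The (matrix of the) spectral projection
`P φ = (⟨φ, D⁻¹ f⟩ / ⟨f, f⟩) D f` satisfies `P² = P`, `P M₁ = M₁ P = λ P`, and its
operator norm on `ℂⁿ` with the `l¹` norm equals `‖D f‖₁ ‖D⁻¹ f‖_∞ / ⟨f, f⟩`. -/
theorem stmt_17 {n : ℕ}
    (M₂ : Matrix (Fin n) (Fin n) ℝ) (hsym : M₂.IsSymm)
    (lam : ℝ) (f : Fin n → ℝ) (hf0 : f ≠ 0)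
    (hf : M₂ *ᵥ f = lam • f)
    (hmult : ∀ g : Fin n → ℝ, M₂ *ᵥ g = lam • g → ∃ c : ℝ, g = c • f)
    (d : Fin n → ℝ) (hd : ∀ i, 0 < d i)
    (M₁ : Matrix (Fin n) (Fin n) ℝ)
    (hM₁ : M₁ = Matrix.diagonal d * M₂ * (Matrix.diagonal d)⁻¹)
    (P : Matrix (Fin n) (Fin n) ℝ)
    (hP : ∀ i j : Fin n, P i j = (d i * f i) * ((d j)⁻¹ * f j) / (∑ k : Fin n, f k ^ 2)) :
    P * P = P ∧
    P * M₁ = lam • P ∧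
    M₁ * P = lam • P ∧
    ‖LinearMap.toContinuousLinearMap
        (Matrix.toLin (PiLp.basisFun 1 ℂ (Fin n)) (PiLp.basisFun 1 ℂ (Fin n))
          (P.map (fun x : ℝ => (x : ℂ))))‖ =
      (∑ i : Fin n, |d i * f i|) * (⨆ j : Fin n, |(d j)⁻¹ * f j|) /
        (∑ k : Fin n, f k ^ 2) := by
  set S : ℝ := ∑ k : Fin n, f k ^ 2 with hS
  have hSpos : 0 < S := by
    obtain ⟨k, hk⟩ := Function.ne_iff.mp hf0
    refine Finset.sum_pos' (fun i _ => sq_nonneg _) ⟨k, Finset.mem_univ k, ?_⟩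
    have := abs_pos.mpr hk
    calc (0:ℝ) < |f k| ^ 2 := pow_pos this 2
    _ = f k ^ 2 := sq_abs _
  have hdne : ∀ i, d i ≠ 0 := fun i => (hd i).ne'
  have hc : ∀ k, d k * (d k)⁻¹ = 1 := fun k => mul_inv_cancel₀ (hdne k)
  have hvu : ∀ k, ((d k)⁻¹ * f k) * (d k * f k) = f k ^ 2 := by
    intro k; field_simp; linear_combination (f k ^ 2) * hc k
  have hDinv : (Matrix.diagonal d)⁻¹ = Matrix.diagonal (fun i => (d i)⁻¹) :=
    Matrix.inv_eq_right_inv (by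
      rw [Matrix.diagonal_mul_diagonal,
        show (fun i => d i * (d i)⁻¹) = fun _ => (1:ℝ) from funext fun i => hc i,
        Matrix.diagonal_one])
  have hM₁' : ∀ i j, M₁ i j = d i * M₂ i j * (d j)⁻¹ := by
    intro i j
    rw [hM₁, hDinv, Matrix.mul_diagonal, Matrix.diagonal_mul]
  have hsym' : ∀ i j, M₂ i j = M₂ j i := fun i j => (Matrix.IsSymm.apply hsym j i)
  have hMf : ∀ j, (∑ k, M₂ k j * f k) = lam * f j := by
    intro j
    have := congrFun hf j
    simp [Matrix.mulVec, dotProduct] at this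
    rw [← this]
    exact Finset.sum_congr rfl fun k _ => by rw [hsym' k j, mul_comm]
  refine ⟨?_, ?_, ?_, ?_⟩
  · ext i j
    rw [Matrix.mul_apply, hP i j]
    rw [show (∑ k, P i k * P k j) = ((d i * f i) * ((d j)⁻¹ * f j) / S / S) * ∑ k, f k ^ 2 by
      rw [Finset.mul_sum]; refine Finset.sum_congr rfl fun k _ => ?_
      rw [hP i k, hP k j, ← hvu k]; ring]
    rw [← hS, div_mul_cancel₀ _ hSpos.ne']
  · ext i j
    rw [Matrix.mul_apply, Matrix.smul_apply, hP i j]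
    rw [show (∑ k, P i k * M₁ k j) = ((d i * f i) * (d j)⁻¹ / S) * ∑ k, M₂ k j * f k by
      rw [Finset.mul_sum]; refine Finset.sum_congr rfl fun k _ => ?_
      rw [hP i k, hM₁' k j]
      linear_combination (d i * f i * f k * M₂ k j * S⁻¹ * (d j)⁻¹) * hc k]
    rw [hMf j, smul_eq_mul]; ring
  · ext i j
    rw [Matrix.mul_apply, Matrix.smul_apply, hP i j]
    rw [show (∑ k, M₁ i k * P k j) = (d i * ((d j)⁻¹ * f j) / S) * ∑ k, M₂ k i * f k by
      rw [Finset.mul_sum]; refine Finset.sum_congr rfl fun k _ => ?_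
      rw [hP k j, hM₁' i k, hsym' i k]
      linear_combination (d i * M₂ k i * f k * f j * (d j)⁻¹ * S⁻¹) * hc k]
    rw [hMf i, smul_eq_mul]; ring
  · -- norm part
    set u : Fin n → ℝ := fun i => d i * f i with hu
    set v : Fin n → ℝ := fun j => (d j)⁻¹ * f j with hv
    set T := LinearMap.toContinuousLinearMap
        (Matrix.toLin (PiLp.basisFun 1 ℂ (Fin n)) (PiLp.basisFun 1 ℂ (Fin n))
          (P.map (fun x : ℝ => (x : ℂ)))) with hT
    have hne : Nonempty (Fin n) := by
      rcases Nat.eq_zero_or_pos n with h | h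
      · exfalso; apply hf0; subst h; ext i; exact absurd i.2 (by omega)
      · exact ⟨⟨0, h⟩⟩
    have hTx : ∀ (x : PiLp 1 (fun _ : Fin n => ℂ)) (i : Fin n),
        T x i = (↑(u i) / ↑S : ℂ) * ∑ j, ↑(v j) * x j := by
      intro x i
      rw [hT, LinearMap.coe_toContinuousLinearMap']
      rw [Matrix.toLin_apply]
      rw [show ((∑ j : Fin n, (P.map (fun x : ℝ => (x:ℂ))).mulVec
            (⇑((PiLp.basisFun 1 ℂ (Fin n)).repr x)) j • (PiLp.basisFun 1 ℂ (Fin n)) j) i)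
        = ∑ j : Fin n, ((P.map (fun x : ℝ => (x:ℂ))).mulVec
            (⇑((PiLp.basisFun 1 ℂ (Fin n)).repr x)) j • (PiLp.basisFun 1 ℂ (Fin n)) j) i from
        by rw [WithLp.ofLp_sum, Finset.sum_apply]]
      simp only [PiLp.basisFun_apply, PiLp.basisFun_repr, Matrix.mulVec,
        dotProduct, PiLp.smul_apply, Pi.smul_apply, PiLp.single_apply,
        Pi.single_apply, smul_eq_mul, mul_ite, mul_one, mul_zero,
        Finset.sum_ite_eq, Finset.sum_ite_eq', Finset.mem_univ, if_true]
      rw [Finset.mul_sum]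
      refine Finset.sum_congr rfl fun j _ => ?_
      rw [Matrix.map_apply, hP i j]
      simp only [hu, hv]
      push_cast
      ring
    have hnorm1 : ∀ (x : PiLp 1 (fun _ : Fin n => ℂ)), ‖x‖ = ∑ i, ‖x i‖ := by
      intro x; simp [PiLp.norm_eq_of_L1]
    -- sup of |v|
    obtain ⟨j₀, hj₀⟩ := Finite.exists_max (fun j => |v j|)
    have hsup : (⨆ j : Fin n, |v j|) = |v j₀| := by
      apply le_antisymm
      · exact ciSup_le hj₀
      · exact le_ciSup (f := fun j => |v j|) (Finite.bddAbove_range _) j₀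
    have hucast : ∀ i : Fin n, ‖(↑(u i) / ↑S : ℂ)‖ = |u i| / S := by
      intro i
      rw [norm_div, Complex.norm_real, Complex.norm_real, Real.norm_eq_abs, Real.norm_eq_abs,
        abs_of_pos hSpos]
    have hRHSnn : 0 ≤ (∑ i : Fin n, |u i|) * |v j₀| / S := by positivity
    rw [hsup]
    apply le_antisymm
    · apply ContinuousLinearMap.opNorm_le_bound _ hRHSnn
      intro x
      set C : ℝ := ‖∑ j, (↑(v j) : ℂ) * x j‖ with hC
      have h1 : ‖T x‖ = (∑ i : Fin n, |u i|) / S * C := by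
        rw [hnorm1]
        rw [show (∑ i, ‖T x i‖) = ∑ i : Fin n, (|u i| / S) * C from
          Finset.sum_congr rfl fun i _ => by rw [hTx x i, norm_mul, hucast i]]
        rw [← Finset.sum_mul, ← Finset.sum_div]
      have h2 : C ≤ |v j₀| * ‖x‖ := by
        calc C ≤ ∑ j, ‖(↑(v j) : ℂ) * x j‖ := norm_sum_le _ _
        _ = ∑ j, |v j| * ‖x j‖ := by
            refine Finset.sum_congr rfl fun j _ => ?_
            rw [norm_mul, Complex.norm_real, Real.norm_eq_abs]
        _ ≤ ∑ j, |v j₀| * ‖x j‖ := by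
            refine Finset.sum_le_sum fun j _ => ?_
            exact mul_le_mul_of_nonneg_right (hj₀ j) (norm_nonneg _)
        _ = |v j₀| * ‖x‖ := by rw [hnorm1 x, Finset.mul_sum]
      rw [h1]
      calc (∑ i : Fin n, |u i|) / S * C ≤ (∑ i : Fin n, |u i|) / S * (|v j₀| * ‖x‖) := by
            apply mul_le_mul_of_nonneg_left h2
            positivity
      _ = (∑ i : Fin n, |u i|) * |v j₀| / S * ‖x‖ := by ring
    · set x : PiLp 1 (fun _ : Fin n => ℂ) :=
        (WithLp.equiv 1 (Fin n → ℂ)).symm (Pi.single j₀ 1) with hx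
      have hxj : ∀ j, x j = if j = j₀ then 1 else 0 := by
        intro j
        rw [hx, WithLp.equiv_symm_apply, WithLp.ofLp_toLp, Pi.single_apply]
      have hxn : ‖x‖ = 1 := by
        rw [hnorm1]
        rw [show (∑ j, ‖x j‖) = ∑ j : Fin n, if j = j₀ then (1:ℝ) else 0 from
          Finset.sum_congr rfl fun j _ => by rw [hxj j]; split <;> simp]
        simp
      have hsum : (∑ j, (↑(v j) : ℂ) * x j) = ↑(v j₀) := by
        rw [show (∑ j, (↑(v j) : ℂ) * x j)
            = ∑ j : Fin n, if j = j₀ then (↑(v j) : ℂ) else 0 from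
          Finset.sum_congr rfl fun j _ => by rw [hxj j]; split <;> simp]
        simp
      have hTxn : ‖T x‖ = (∑ i : Fin n, |u i|) * |v j₀| / S := by
        rw [hnorm1]
        rw [show (∑ i, ‖T x i‖) = ∑ i : Fin n, (|u i| / S) * |v j₀| from
          Finset.sum_congr rfl fun i _ => by
            rw [hTx x i, hsum, norm_mul, hucast i, Complex.norm_real, Real.norm_eq_abs]]
        rw [← Finset.sum_mul, ← Finset.sum_div]
        ring
      calc (∑ i : Fin n, |u i|) * |v j₀| / S = ‖T x‖ := hTxn.symm
      _ ≤ ‖T‖ * ‖x‖ := T.le_opNorm x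
      _ = ‖T‖ := by rw [hxn, mul_one]
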